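/- In the arrow 2-category C^2 of a strict semi-monoidal 2-category C, a 1-cell (f₀, f₁, F) : x → y (a square with F : f₀∘y ⟹ x∘f₁) is an equi-arrow whenever f₀ and f₁ are equi-arrows in C and the 2-cell F is invertible. -/

import Mathlib

open CategoryTheory Bicategory

universe w v u

variable {B : Type u} [Bicategory.{w, v} B] [Bicategory.Strict B]

/-- Horizontal composite of two squares (1-cells of the arrow 2-category `C²`). -/
def compSq {X₀ X₁ Y₀ Y₁ Z₀ Z₁ : B} {x : X₀ ⟶ X₁} {y : Y₀ ⟶ Y₁} {z : Z₀ ⟶ Z₁}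
    {f₀ : X₀ ⟶ Y₀} {f₁ : X₁ ⟶ Y₁} {g₀ : Y₀ ⟶ Z₀} {g₁ : Y₁ ⟶ Z₁}
    (F : f₀ ≫ y ⟶ x ≫ f₁) (G : g₀ ≫ z ⟶ y ≫ g₁) :
    (f₀ ≫ g₀) ≫ z ⟶ x ≫ (f₁ ≫ g₁) :=
  eqToHom (Category.assoc f₀ g₀ z) ≫ (f₀ ◁ G) ≫ eqToHom (Category.assoc f₀ y g₁).symm ≫
    (F ▷ g₁) ≫ eqToHom (Category.assoc x f₁ g₁)

/-- The identity square on an arrow `x` (the identity 1-cell of `C²` at the object `x`). -/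
def idSq {X₀ X₁ : B} (x : X₀ ⟶ X₁) : 𝟙 X₀ ≫ x ⟶ x ≫ 𝟙 X₁ :=
  eqToHom (by rw [Category.id_comp, Category.comp_id])

section AuxEquiArrow
variable {X₀ X₁ Y₀ Y₁ : B} (x : X₀ ⟶ X₁) (y : Y₀ ⟶ Y₁)

set_option maxHeartbeats 1000000 in
/-- The pseudo-inverse square of a square `F` whose vertical edges are (adjoint)
equivalences and whose 2-cell is invertible. -/
noncomputable def pseudoInvSq (e₀ : Bicategory.Equivalence X₀ Y₀)
    (e₁ : Bicategory.Equivalence X₁ Y₁)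
    (F : e₀.hom ≫ y ⟶ x ≫ e₁.hom) [IsIso F] : e₀.inv ≫ x ⟶ y ≫ e₁.inv :=
  𝟙 _ ⊗≫ e₀.inv ◁ x ◁ e₁.unit.hom ⊗≫ e₀.inv ◁ inv F ▷ e₁.inv ⊗≫
    e₀.counit.hom ▷ (y ≫ e₁.inv) ⊗≫ 𝟙 _

set_option maxHeartbeats 1000000 in
instance pseudoInvSq_isIso (e₀ : Bicategory.Equivalence X₀ Y₀)
    (e₁ : Bicategory.Equivalence X₁ Y₁)
    (F : e₀.hom ≫ y ⟶ x ≫ e₁.hom) [IsIso F] : IsIso (pseudoInvSq x y e₀ e₁ F) := by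
  dsimp only [pseudoInvSq, bicategoricalComp]
  infer_instance

omit [Bicategory.Strict B] in
set_option maxHeartbeats 1000000 in
theorem hom_whiskerLeft_counit {a b : B} (e : Bicategory.Equivalence a b) :
    e.hom ◁ e.counit.hom = 𝟙 _ ⊗≫ e.unit.inv ▷ e.hom ⊗≫ ((λ_ e.hom).hom ≫ (ρ_ e.hom).inv) := by
  calc
    e.hom ◁ e.counit.hom
      = 𝟙 _ ⊗≫ (e.unit.inv ≫ e.unit.hom) ▷ e.hom ⊗≫ e.hom ◁ e.counit.hom := by
        rw [Iso.inv_hom_id]; bicategory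
    _ = 𝟙 _ ⊗≫ e.unit.inv ▷ e.hom ⊗≫ leftZigzag e.unit.hom e.counit.hom := by
        dsimp only [leftZigzag]; bicategory
    _ = _ := by rw [Bicategory.Equivalence.left_triangle_hom]

set_option maxHeartbeats 1000000 in
theorem cyl_one (e₀ : Bicategory.Equivalence X₀ Y₀) (e₁ : Bicategory.Equivalence X₁ Y₁)
    (F : e₀.hom ≫ y ⟶ x ≫ e₁.hom) [IsIso F] :
    (α_ e₀.hom e₀.inv x).hom ≫ e₀.hom ◁ pseudoInvSq x y e₀ e₁ F ≫
      (α_ e₀.hom y e₁.inv).inv ≫ F ▷ e₁.inv ≫ (α_ x e₁.hom e₁.inv).hom ≫ x ◁ e₁.unit.inv =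
    e₀.unit.inv ▷ x ≫ (λ_ x).hom ≫ (ρ_ x).inv := by
  calc
    _ = 𝟙 _ ⊗≫ e₀.hom ◁ e₀.inv ◁ x ◁ e₁.unit.hom ⊗≫
        e₀.hom ◁ e₀.inv ◁ inv F ▷ e₁.inv ⊗≫
        (e₀.hom ◁ e₀.counit.hom) ▷ (y ≫ e₁.inv) ⊗≫
        F ▷ e₁.inv ⊗≫ x ◁ e₁.unit.inv ⊗≫ 𝟙 _ := by
      dsimp only [pseudoInvSq]; bicategory
    _ = 𝟙 _ ⊗≫ e₀.hom ◁ e₀.inv ◁ x ◁ e₁.unit.hom ⊗≫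
        (e₀.hom ≫ e₀.inv) ◁ (inv F ▷ e₁.inv) ⊗≫
        (e₀.unit.inv ▷ ((e₀.hom ≫ y) ≫ e₁.inv) ≫ 𝟙 X₀ ◁ (F ▷ e₁.inv)) ⊗≫
        x ◁ e₁.unit.inv ⊗≫ 𝟙 _ := by
      rw [hom_whiskerLeft_counit]; bicategory
    _ = 𝟙 _ ⊗≫ e₀.hom ◁ e₀.inv ◁ x ◁ e₁.unit.hom ⊗≫
        (e₀.hom ≫ e₀.inv) ◁ ((inv F ≫ F) ▷ e₁.inv) ⊗≫
        e₀.unit.inv ▷ ((x ≫ e₁.hom) ≫ e₁.inv) ⊗≫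
        x ◁ e₁.unit.inv ⊗≫ 𝟙 _ := by
      rw [← whisker_exchange]; bicategory
    _ = 𝟙 _ ⊗≫
        ((e₀.hom ≫ e₀.inv) ◁ (x ◁ e₁.unit.hom) ≫ e₀.unit.inv ▷ (x ≫ e₁.hom ≫ e₁.inv)) ⊗≫
        x ◁ e₁.unit.inv ⊗≫ 𝟙 _ := by
      rw [IsIso.inv_hom_id]; bicategory
    _ = 𝟙 _ ⊗≫ e₀.unit.inv ▷ (x ≫ 𝟙 X₁) ⊗≫
        x ◁ (e₁.unit.hom ≫ e₁.unit.inv) ⊗≫ 𝟙 _ := by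
      rw [whisker_exchange]; bicategory
    _ = _ := by rw [Iso.hom_inv_id]; bicategory

set_option maxHeartbeats 1000000 in
theorem cyl_two (e₀ : Bicategory.Equivalence X₀ Y₀) (e₁ : Bicategory.Equivalence X₁ Y₁)
    (F : e₀.hom ≫ y ⟶ x ≫ e₁.hom) [IsIso F] :
    (α_ e₀.inv e₀.hom y).hom ≫ e₀.inv ◁ F ≫ (α_ e₀.inv x e₁.hom).inv ≫
      pseudoInvSq x y e₀ e₁ F ▷ e₁.hom ≫ (α_ y e₁.inv e₁.hom).hom ≫ y ◁ e₁.counit.hom =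
    e₀.counit.hom ▷ y ≫ (λ_ y).hom ≫ (ρ_ y).inv := by
  calc
    _ = 𝟙 _ ⊗≫ e₀.inv ◁ F ⊗≫ (e₀.inv ◁ x ◁ e₁.unit.hom) ▷ e₁.hom ⊗≫
        (e₀.inv ◁ inv F ▷ e₁.inv) ▷ e₁.hom ⊗≫
        (e₀.counit.hom ▷ (y ≫ e₁.inv ≫ e₁.hom) ≫ 𝟙 Y₀ ◁ (y ◁ e₁.counit.hom)) ⊗≫ 𝟙 _ := by
      dsimp only [pseudoInvSq]; bicategory
    _ = 𝟙 _ ⊗≫ e₀.inv ◁ F ⊗≫ (e₀.inv ◁ x ◁ e₁.unit.hom) ▷ e₁.hom ⊗≫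
        e₀.inv ◁ (inv F ▷ (e₁.inv ≫ e₁.hom) ≫ (e₀.hom ≫ y) ◁ e₁.counit.hom) ⊗≫
        e₀.counit.hom ▷ (y ≫ 𝟙 Y₁) ⊗≫ 𝟙 _ := by
      rw [← whisker_exchange e₀.counit.hom (y ◁ e₁.counit.hom)]; bicategory
    _ = 𝟙 _ ⊗≫ e₀.inv ◁ F ⊗≫
        e₀.inv ◁ x ◁ leftZigzag e₁.unit.hom e₁.counit.hom ⊗≫
        e₀.inv ◁ inv F ▷ 𝟙 Y₁ ⊗≫ e₀.counit.hom ▷ (y ≫ 𝟙 Y₁) ⊗≫ 𝟙 _ := by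
      rw [← whisker_exchange (inv F) e₁.counit.hom]; dsimp only [leftZigzag]; bicategory
    _ = 𝟙 _ ⊗≫ e₀.inv ◁ (F ≫ inv F) ⊗≫ e₀.counit.hom ▷ (y ≫ 𝟙 Y₁) ⊗≫ 𝟙 _ := by
      rw [Bicategory.Equivalence.left_triangle_hom]; bicategory
    _ = _ := by rw [IsIso.hom_inv_id]; bicategory

end AuxEquiArrow

theorem compSq_eq {X₀ X₁ Y₀ Y₁ Z₀ Z₁ : B} {x : X₀ ⟶ X₁} {y : Y₀ ⟶ Y₁} {z : Z₀ ⟶ Z₁}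
    {f₀ : X₀ ⟶ Y₀} {f₁ : X₁ ⟶ Y₁} {g₀ : Y₀ ⟶ Z₀} {g₁ : Y₁ ⟶ Z₁}
    (F : f₀ ≫ y ⟶ x ≫ f₁) (G : g₀ ≫ z ⟶ y ≫ g₁) :
    compSq F G = (α_ f₀ g₀ z).hom ≫ (f₀ ◁ G) ≫ (α_ f₀ y g₁).inv ≫
      (F ▷ g₁) ≫ (α_ x f₁ g₁).hom := by
  simp [compSq, Bicategory.Strict.associator_eqToIso]

theorem idSq_eq {X₀ X₁ : B} (x : X₀ ⟶ X₁) : idSq x = (λ_ x).hom ≫ (ρ_ x).inv := by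
  simp [idSq, Bicategory.Strict.leftUnitor_eqToIso, Bicategory.Strict.rightUnitor_eqToIso]

/-- A 1-cell `(f₀, f₁, F)` of the arrow 2-category `C²` of a strict 2-category `C` is an
equi-arrow whenever its components `f₀` and `f₁` are equi-arrows in `C` and the 2-cell `F` is
invertible: it admits a pseudo-inverse square `(g₀, g₁, G)`, with invertible cylinders
comparing both composites with the identity squares. -/
theorem arrowCat_equiArrow_of_components
    {X₀ X₁ Y₀ Y₁ : B} (x : X₀ ⟶ X₁) (y : Y₀ ⟶ Y₁)
    (f₀ : X₀ ⟶ Y₀) (f₁ : X₁ ⟶ Y₁) (F : f₀ ≫ y ⟶ x ≫ f₁)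
    (h₀ : ∃ g : Y₀ ⟶ X₀, Nonempty (f₀ ≫ g ≅ 𝟙 X₀) ∧ Nonempty (g ≫ f₀ ≅ 𝟙 Y₀))
    (h₁ : ∃ g : Y₁ ⟶ X₁, Nonempty (f₁ ≫ g ≅ 𝟙 X₁) ∧ Nonempty (g ≫ f₁ ≅ 𝟙 Y₁))
    (hF : IsIso F) :
    ∃ (g₀ : Y₀ ⟶ X₀) (g₁ : Y₁ ⟶ X₁) (G : g₀ ≫ x ⟶ y ≫ g₁),
      IsIso G ∧
      (∃ (m₀ : f₀ ≫ g₀ ≅ 𝟙 X₀) (m₁ : f₁ ≫ g₁ ≅ 𝟙 X₁),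
        compSq F G ≫ (x ◁ m₁.hom) = (m₀.hom ▷ x) ≫ idSq x) ∧
      (∃ (n₀ : g₀ ≫ f₀ ≅ 𝟙 Y₀) (n₁ : g₁ ≫ f₁ ≅ 𝟙 Y₁),
        compSq G F ≫ (y ◁ n₁.hom) = (n₀.hom ▷ y) ≫ idSq y) := by
  obtain ⟨k₀, ⟨η₀⟩, ⟨ε₀⟩⟩ := h₀
  obtain ⟨k₁, ⟨η₁⟩, ⟨ε₁⟩⟩ := h₁
  haveI := hF
  let e₀ : Bicategory.Equivalence X₀ Y₀ :=
    Bicategory.Equivalence.mkOfAdjointifyCounit η₀.symm ε₀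
  let e₁ : Bicategory.Equivalence X₁ Y₁ :=
    Bicategory.Equivalence.mkOfAdjointifyCounit η₁.symm ε₁
  refine ⟨e₀.inv, e₁.inv, @pseudoInvSq _ _ _ _ _ _ _ x y e₀ e₁ F hF,
    @pseudoInvSq_isIso _ _ _ _ _ _ _ x y e₀ e₁ F hF,
    ⟨e₀.unit.symm, e₁.unit.symm, ?_⟩, ⟨e₀.counit, e₁.counit, ?_⟩⟩
  · simp only [compSq_eq, idSq_eq, Iso.symm_hom, Category.assoc]
    exact @cyl_one _ _ _ _ _ _ _ x y e₀ e₁ F hF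
  · simp only [compSq_eq, idSq_eq, Category.assoc]
    exact @cyl_two _ _ _ _ _ _ _ x y e₀ e₁ F hF
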